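/- Let α_1, α_2 > 1. The unique solution of the system x1 = x2/α_2 and x2 = 1 - (1-x1)/α_1 is (x1*, x2*) = ((α_1 - 1)/(α_1·α_2 - 1), α_2·(α_1 - 1)/(α_1·α_2 - 1)), and the midpoint satisfies (x1* + x2*)/2 = 1/2 + (α_1 - α_2)/(2(α_1·α_2 - 1)). In particular, if α_1 > α_2 (candidate 1 more flexible), the midpoint exceeds 1/2, so candidate 1's platform is more centrist. -/

import Mathlib

theorem stmt18 (α1 α2 : ℝ) (hα1 : 1 < α1) (hα2 : 1 < α2) :
    (∀ x1 x2 : ℝ,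
      (x1 = x2 / α2 ∧ x2 = 1 - (1 - x1) / α1) ↔
        (x1 = (α1 - 1) / (α1 * α2 - 1) ∧ x2 = α2 * (α1 - 1) / (α1 * α2 - 1))) ∧
    ((α1 - 1) / (α1 * α2 - 1) + α2 * (α1 - 1) / (α1 * α2 - 1)) / 2 =
      1/2 + (α1 - α2) / (2 * (α1 * α2 - 1)) ∧
    (α2 < α1 → ((α1 - 1) / (α1 * α2 - 1) + α2 * (α1 - 1) / (α1 * α2 - 1)) / 2 > 1/2) := by
  have h1 : (0:ℝ) < α1 := by linarith
  have h2 : (0:ℝ) < α2 := by linarith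
  have hd : (0:ℝ) < α1 * α2 - 1 := by nlinarith
  have h1' : α1 ≠ 0 := ne_of_gt h1
  have h2' : α2 ≠ 0 := ne_of_gt h2
  have hd' : α1 * α2 - 1 ≠ 0 := ne_of_gt hd
  refine ⟨fun x1 x2 => ?_, by field_simp; ring, fun h => ?_⟩
  · constructor
    · rintro ⟨ha, hb⟩
      rw [ha] at hb ⊢
      have hx2 : x2 = α2 * (α1 - 1) / (α1 * α2 - 1) := by
        field_simp at hb
        field_simp
        rw [eq_div_iff (by nlinarith)]
        linear_combination hb
      rw [hx2]
      constructor
      · field_simp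
      · exact hx2 ▸ rfl
    · rintro ⟨ha, hb⟩
      subst ha hb
      constructor
      · field_simp
      · rw [eq_sub_iff_add_eq, ← eq_sub_iff_add_eq', div_eq_iff h1', one_sub_div hd', one_sub_div hd', div_mul_eq_mul_div, div_left_inj' hd']
        ring
  · have key : 1 < (α1 - 1 + α2 * (α1 - 1)) / (α1 * α2 - 1) := by
      rw [lt_div_iff₀ hd]; nlinarith
    have hs : (α1 - 1) / (α1 * α2 - 1) + α2 * (α1 - 1) / (α1 * α2 - 1)
        = (α1 - 1 + α2 * (α1 - 1)) / (α1 * α2 - 1) := by ring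
    rw [gt_iff_lt, hs]
    linarith
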